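/- Fix a single IFS level ($M = 1$). Define $T : \mathcal{G} \to \mathcal{G}$ by $(Tg)(x) = G_n(L_n^{-1}(x), g(L_n^{-1}(x)))$ for $x \in I_n = [x_{n-1}, x_n]$, where $G_n(x,y) = e_n x + \gamma_n y + f_n$ satisfies the join-up conditions $G_n(x_0, y_0) = y_{n-1}$, $G_n(x_N, y_N) = y_n$, and $|\gamma_n| < 1$ for all $n$. Then $T$ is well-defined (i.e., $Tg$ is continuous and satisfies the endpoint conditions), and $T$ is a contraction on $(\mathcal{G}, d_{\mathcal{G}})$ with contraction ratio $\max_n |\gamma_n| < 1$; hence $T$ has a unique fixed point $g \in \mathcal{G}$, and this fixed point satisfies $g(x_n) = y_n$ for all $n = 0, \ldots, N$. -/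

import Mathlib

open Set

namespace Stmt6Aux

lemma contOn_union_closed {s t : Set ℝ} {f : ℝ → ℝ} (hs : IsClosed s) (ht : IsClosed t)
    (hfs : ContinuousOn f s) (hft : ContinuousOn f t) : ContinuousOn f (s ∪ t) := by
  intro p hp
  have h1 : ContinuousWithinAt f s p := by
    by_cases hps : p ∈ s
    · exact hfs p hps
    · exact continuousWithinAt_of_notMem_closure (by rwa [hs.closure_eq])
  have h2 : ContinuousWithinAt f t p := by
    by_cases hpt : p ∈ t
    · exact hft p hpt
    · exact continuousWithinAt_of_notMem_closure (by rwa [ht.closure_eq])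
  exact h1.union h2

noncomputable def linv (a b : ℕ → ℝ) (n : ℕ) (s : ℝ) : ℝ := (s - b n) / a n

noncomputable def piece (a b e γ f : ℕ → ℝ) (g : ℝ → ℝ) (n : ℕ) (s : ℝ) : ℝ :=
  e n * linv a b n s + γ n * g (linv a b n s) + f n

noncomputable def Tf (x y a b e γ f : ℕ → ℝ) (g : ℝ → ℝ) : ℕ → ℝ → ℝ
  | 0 => fun _ => y 0
  | n+1 => fun s =>
      if s ≤ x n then Tf x y a b e γ f g n s else piece a b e γ f g (n+1) s

variable {N : ℕ} {x y a b e γ f : ℕ → ℝ}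

lemma linv_L {n : ℕ} (han : 0 < a n) (t : ℝ) : linv a b n (a n * t + b n) = t := by
  unfold linv; rw [div_eq_iff han.ne']; ring

lemma L_linv {n : ℕ} (han : 0 < a n) (s : ℝ) : a n * linv a b n s + b n = s := by
  unfold linv
  have hne := han.ne'
  have h : a n * ((s - b n) / a n) = s - b n := by field_simp
  linarith

lemma linv_mono {n : ℕ} (han : 0 < a n) {s s' : ℝ} (h : s ≤ s') :
    linv a b n s ≤ linv a b n s' := by
  unfold linv; gcongr

section Mono
variable (hx : ∀ i, i < N → x i < x (i + 1))
include hx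

lemma xmono : ∀ i j : ℕ, i ≤ j → j ≤ N → x i ≤ x j := by
  intro i j hij hjN
  induction j with
  | zero => interval_cases i; exact le_rfl
  | succ k ih =>
    rcases Nat.lt_succ_iff_lt_or_eq.mp (Nat.lt_succ_of_le hij) with h | h
    rotate_left
    · exact h ▸ le_rfl
    rcases Nat.lt_succ_iff_lt_or_eq.mp h with h | h
    all_goals
      first
      | exact le_trans (ih (le_of_lt h) (le_trans (Nat.le_succ k) hjN))
          (le_of_lt (hx k (Nat.lt_of_succ_le hjN)))
      | exact le_trans (le_of_eq (congrArg x h))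
          (le_of_lt (hx k (Nat.lt_of_succ_le hjN)))

end Mono


section Main
variable (hx : ∀ i, i < N → x i < x (i + 1))
  (ha : ∀ n, 1 ≤ n → n ≤ N → 0 < a n)
  (hA0 : ∀ n, 1 ≤ n → n ≤ N → a n * x 0 + b n = x (n - 1))
  (hAN : ∀ n, 1 ≤ n → n ≤ N → a n * x N + b n = x n)
  (hj0 : ∀ n, 1 ≤ n → n ≤ N → e n * x 0 + γ n * y 0 + f n = y (n - 1))
  (hjN : ∀ n, 1 ≤ n → n ≤ N → e n * x N + γ n * y N + f n = y n)

include ha hA0 in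
lemma linv_left {n : ℕ} (h1 : 1 ≤ n) (h2 : n ≤ N) : linv a b n (x (n - 1)) = x 0 := by
  rw [← hA0 n h1 h2, linv_L (ha n h1 h2)]

include ha hAN in
lemma linv_right {n : ℕ} (h1 : 1 ≤ n) (h2 : n ≤ N) : linv a b n (x n) = x N := by
  rw [← hAN n h1 h2, linv_L (ha n h1 h2)]

include ha hA0 hAN in
lemma linv_mem {n : ℕ} (h1 : 1 ≤ n) (h2 : n ≤ N) {s : ℝ}
    (hs : s ∈ Icc (x (n - 1)) (x n)) : linv a b n s ∈ Icc (x 0) (x N) := by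
  constructor
  · rw [← linv_left ha hA0 h1 h2]; exact linv_mono (ha n h1 h2) hs.1
  · rw [← linv_right ha hAN h1 h2]; exact linv_mono (ha n h1 h2) hs.2

include ha hA0 hAN in
lemma L_mem {n : ℕ} (h1 : 1 ≤ n) (h2 : n ≤ N) {t : ℝ}
    (ht : t ∈ Icc (x 0) (x N)) : a n * t + b n ∈ Icc (x (n - 1)) (x n) := by
  have han := ha n h1 h2
  constructor
  · rw [← hA0 n h1 h2]; have := ht.1; nlinarith
  · rw [← hAN n h1 h2]; have := ht.2; nlinarith

include ha hA0 hAN in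
lemma piece_contOn {n : ℕ} (h1 : 1 ≤ n) (h2 : n ≤ N) {g : ℝ → ℝ}
    (hg : ContinuousOn g (Icc (x 0) (x N))) :
    ContinuousOn (piece a b e γ f g n) (Icc (x (n - 1)) (x n)) := by
  have hlinv : Continuous (linv a b n) := by
    unfold linv; exact (continuous_id.sub continuous_const).div_const _
  have hcomp : ContinuousOn (fun s => g (linv a b n s)) (Icc (x (n - 1)) (x n)) :=
    hg.comp hlinv.continuousOn (fun s hs => linv_mem ha hA0 hAN h1 h2 hs)
  unfold piece
  exact ((continuousOn_const.mul hlinv.continuousOn).add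
    (continuousOn_const.mul hcomp)).add continuousOn_const

-- value of piece n at the left endpoint of its interval
include ha hA0 hj0 in
lemma piece_left {n : ℕ} (h1 : 1 ≤ n) (h2 : n ≤ N) {g : ℝ → ℝ} (hg0 : g (x 0) = y 0) :
    piece a b e γ f g n (x (n - 1)) = y (n - 1) := by
  unfold piece
  rw [linv_left ha hA0 h1 h2, hg0, hj0 n h1 h2]

include ha hAN hjN in
lemma piece_right {n : ℕ} (h1 : 1 ≤ n) (h2 : n ≤ N) {g : ℝ → ℝ} (hgN : g (x N) = y N) :
    piece a b e γ f g n (x n) = y n := by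
  unfold piece
  rw [linv_right ha hAN h1 h2, hgN, hjN n h1 h2]

include hx in
lemma Tf_stab (g : ℝ → ℝ) :
    ∀ m', m' ≤ N → ∀ m, m ≤ m' → ∀ s, s ≤ x m →
      Tf x y a b e γ f g m' s = Tf x y a b e γ f g m s := by
  intro m'
  induction m' with
  | zero => intro _ m hm s _; interval_cases m; rfl
  | succ k ih =>
    intro hk1 m hm s hs
    rcases Nat.lt_succ_iff_lt_or_eq.mp (Nat.lt_succ_of_le hm) with h | h
    · have hmk : m ≤ k := Nat.lt_succ_iff.mp h
      have hsk : s ≤ x k := le_trans hs (xmono hx m k hmk (Nat.le_of_succ_le hk1))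
      show (if s ≤ x k then Tf x y a b e γ f g k s else _) = _
      rw [if_pos hsk]
      exact ih (Nat.le_of_succ_le hk1) m hmk s hs
    · rw [h]

include hx ha hA0 hAN hj0 hjN in
lemma Tf_main {g : ℝ → ℝ} (hg : ContinuousOn g (Icc (x 0) (x N)))
    (hg0 : g (x 0) = y 0) (hgN : g (x N) = y N) :
    ∀ m, 1 ≤ m → m ≤ N →
      (∀ n, 1 ≤ n → n ≤ m → ∀ s ∈ Icc (x (n - 1)) (x n),
        Tf x y a b e γ f g m s = piece a b e γ f g n s) ∧
      ContinuousOn (Tf x y a b e γ f g m) (Icc (x 0) (x m)) := by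
  intro m hm1
  induction m, hm1 using Nat.le_induction with
  | base =>
    intro h1N
    have hpe : ∀ s ∈ Icc (x 0) (x 1), Tf x y a b e γ f g 1 s = piece a b e γ f g 1 s := by
      intro s hs
      show (if s ≤ x 0 then y 0 else piece a b e γ f g 1 s) = _
      by_cases h : s ≤ x 0
      · rw [if_pos h]
        have : s = x 0 := le_antisymm h hs.1
        rw [this]
        have := piece_left ha hA0 hj0 (le_refl 1) h1N hg0
        simpa using this.symm
      · rw [if_neg h]
    refine ⟨?_, ?_⟩
    · intro n hn1 hn2 s hs
      interval_cases n
      simpa using hpe s (by simpa using hs)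
    · have hc : ContinuousOn (piece a b e γ f g 1) (Icc (x 0) (x 1)) := by
        have := piece_contOn (e := e) (γ := γ) (f := f) ha hA0 hAN (le_refl 1) h1N hg
        simpa using this
      exact hc.congr (fun s hs => hpe s hs)
  | succ m hm1 ih =>
    intro hm2
    have hmN : m ≤ N := Nat.le_of_succ_le hm2
    obtain ⟨ihp, ihc⟩ := ih hmN
    have hpe : ∀ s ∈ Icc (x m) (x (m + 1)),
        Tf x y a b e γ f g (m + 1) s = piece a b e γ f g (m + 1) s := by
      intro s hs
      show (if s ≤ x m then Tf x y a b e γ f g m s else _) = _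
      by_cases h : s ≤ x m
      · rw [if_pos h]
        have hsm : s = x m := le_antisymm h hs.1
        rw [hsm]
        have h1 : Tf x y a b e γ f g m (x m) = piece a b e γ f g m (x m) :=
          ihp m hm1 le_rfl (x m) ⟨xmono hx (m - 1) m (Nat.sub_le m 1) hmN, le_rfl⟩
        have h2 : piece a b e γ f g m (x m) = y m := piece_right ha hAN hjN hm1 hmN hgN
        have h3 : piece a b e γ f g (m + 1) (x m) = y m := by
          have := piece_left ha hA0 hj0 (Nat.le_add_left 1 m) hm2 hg0
          simpa using this
        rw [h1, h2, h3]
      · rw [if_neg h]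
    have hstab : ∀ s ∈ Icc (x 0) (x m),
        Tf x y a b e γ f g (m + 1) s = Tf x y a b e γ f g m s := by
      intro s hs
      exact Tf_stab hx g (m + 1) hm2 m (Nat.le_succ m) s hs.2
    refine ⟨?_, ?_⟩
    · intro n hn1 hn2 s hs
      rcases Nat.lt_succ_iff_lt_or_eq.mp (Nat.lt_succ_of_le hn2) with h | h
      · have hnm : n ≤ m := Nat.lt_succ_iff.mp h
        have hsm : s ≤ x m := le_trans hs.2 (xmono hx n m hnm hmN)
        rw [Tf_stab hx g (m + 1) hm2 m (Nat.le_succ m) s hsm]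
        exact ihp n hn1 hnm s hs
      · subst h
        exact hpe s (by simpa using hs)
    · have hcover : Icc (x 0) (x (m + 1)) = Icc (x 0) (x m) ∪ Icc (x m) (x (m + 1)) :=
        (Icc_union_Icc_eq_Icc (xmono hx 0 m (Nat.zero_le m) hmN)
          (xmono hx m (m + 1) (Nat.le_succ m) hm2)).symm
      rw [hcover]
      exact contOn_union_closed isClosed_Icc isClosed_Icc
        (ContinuousOn.congr ihc hstab)
        (by
          have hc : ContinuousOn (piece a b e γ f g (m + 1)) (Icc (x m) (x (m + 1))) := by
            have := piece_contOn (e := e) (γ := γ) (f := f) ha hA0 hAN (Nat.le_add_left 1 m) hm2 hg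
            simpa using this
          exact hc.congr (fun s hs => hpe s hs))


include hx ha hA0 hAN hj0 hjN in
lemma Tf_eq (hN : 1 ≤ N) {g : ℝ → ℝ} (hg : ContinuousOn g (Icc (x 0) (x N)))
    (hg0 : g (x 0) = y 0) (hgN : g (x N) = y N)
    {n : ℕ} (h1 : 1 ≤ n) (h2 : n ≤ N) {t : ℝ} (ht : t ∈ Icc (x 0) (x N)) :
    Tf x y a b e γ f g N (a n * t + b n) = e n * t + γ n * g t + f n := by
  have hmem := L_mem ha hA0 hAN h1 h2 ht
  have := ((Tf_main hx ha hA0 hAN hj0 hjN hg hg0 hgN N hN le_rfl).1 n h1 h2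
    (a n * t + b n) hmem)
  rw [this]
  unfold piece
  rw [linv_L (ha n h1 h2)]

include hx in
lemma Tf_x0 (hN : 1 ≤ N) (g : ℝ → ℝ) : Tf x y a b e γ f g N (x 0) = y 0 := by
  rw [Tf_stab hx g N le_rfl 0 (Nat.zero_le N) (x 0) le_rfl]
  rfl

include hx ha hA0 hAN hj0 hjN in
lemma Tf_xN (hN : 1 ≤ N) {g : ℝ → ℝ} (hg : ContinuousOn g (Icc (x 0) (x N)))
    (hg0 : g (x 0) = y 0) (hgN : g (x N) = y N) :
    Tf x y a b e γ f g N (x N) = y N := by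
  have h1 : Tf x y a b e γ f g N (x N) = piece a b e γ f g N (x N) :=
    (Tf_main hx ha hA0 hAN hj0 hjN hg hg0 hgN N hN le_rfl).1 N hN le_rfl (x N)
      ⟨xmono hx (N - 1) N (Nat.sub_le N 1) le_rfl, le_rfl⟩
  rw [h1, piece_right ha hAN hjN hN le_rfl hgN]

include hx in
lemma cover (hN : 1 ≤ N) {s : ℝ} (hs : s ∈ Icc (x 0) (x N)) :
    ∃ n, 1 ≤ n ∧ n ≤ N ∧ s ∈ Icc (x (n - 1)) (x n) := by
  suffices h : ∀ m, 1 ≤ m → m ≤ N → s ∈ Icc (x 0) (x m) →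
      ∃ n, 1 ≤ n ∧ n ≤ m ∧ s ∈ Icc (x (n - 1)) (x n) by
    obtain ⟨n, h1, h2, h3⟩ := h N hN le_rfl hs
    exact ⟨n, h1, h2, h3⟩
  intro m hm1
  induction m, hm1 using Nat.le_induction with
  | base => intro _ hsm; exact ⟨1, le_rfl, le_rfl, by simpa using hsm⟩
  | succ m hm1 ih =>
    intro hm2 hsm
    by_cases h : s ≤ x m
    · obtain ⟨n, h1, h2, h3⟩ := ih (Nat.le_of_succ_le hm2) ⟨hsm.1, h⟩
      exact ⟨n, h1, Nat.le_succ_of_le h2, h3⟩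
    · exact ⟨m + 1, Nat.le_add_left 1 m, le_rfl, by
        simpa using ⟨le_of_not_ge h, hsm.2⟩⟩


include hx ha hA0 hAN hj0 hjN in
lemma exists_fp (hN : 1 ≤ N) (hγ : ∀ n, 1 ≤ n → n ≤ N → |γ n| < 1) :
    ∃ g : ℝ → ℝ, (ContinuousOn g (Icc (x 0) (x N)) ∧
        g (x 0) = y 0 ∧ g (x N) = y N ∧
        (∀ n, 1 ≤ n → n ≤ N → ∀ t ∈ Icc (x 0) (x N),
          g (a n * t + b n) = e n * t + γ n * g t + f n)) ∧
      (∀ n, n ≤ N → g (x n) = y n) ∧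
      ∀ g' : ℝ → ℝ, (ContinuousOn g' (Icc (x 0) (x N)) ∧
        g' (x 0) = y 0 ∧ g' (x N) = y N ∧
        (∀ n, 1 ≤ n → n ≤ N → ∀ t ∈ Icc (x 0) (x N),
          g' (a n * t + b n) = e n * t + γ n * g' t + f n)) →
        EqOn g g' (Icc (x 0) (x N)) := by
  classical
  have hle : x 0 ≤ x N := xmono hx 0 N (Nat.zero_le N) le_rfl
  have hlt : x 0 < x N := by
    have h := hx (N - 1) (Nat.sub_lt (Nat.lt_of_lt_of_le one_pos hN) one_pos)
    rw [Nat.sub_add_cancel hN] at h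
    exact lt_of_le_of_lt (xmono hx 0 (N - 1) (Nat.zero_le _) (Nat.sub_le N 1)) h
  set I := Icc (x 0) (x N) with hI
  let p0 : I := ⟨x 0, left_mem_Icc.mpr hle⟩
  let pN : I := ⟨x N, right_mem_Icc.mpr hle⟩
  -- the space 𝒢
  let E : Set C(I, ℝ) := {h | h p0 = y 0 ∧ h pN = y N}
  have hEclosed : IsClosed E := by
    have : E = (fun h : C(I, ℝ) => h p0) ⁻¹' {y 0} ∩ (fun h : C(I, ℝ) => h pN) ⁻¹' {y N} := by
      ext h; simp [E]
    rw [this]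
    exact IsClosed.inter (isClosed_singleton.preimage (continuous_eval_const p0))
      (isClosed_singleton.preimage (continuous_eval_const pN))
  haveI : CompleteSpace E := hEclosed.completeSpace_coe
  have hne : x N - x 0 ≠ 0 := sub_ne_zero.mpr (ne_of_gt hlt)
  let ℓ : C(I, ℝ) := ⟨fun p => y 0 + ((p : ℝ) - x 0) * ((y N - y 0) / (x N - x 0)), by
    exact (continuous_const.add (((continuous_subtype_val).sub continuous_const).mul
      continuous_const))⟩
  have hℓE : ℓ ∈ E := by
    constructor
    · show y 0 + ((x 0 : ℝ) - x 0) * _ = y 0; ring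
    · show y 0 + ((x N : ℝ) - x 0) * ((y N - y 0) / (x N - x 0)) = y N
      field_simp
      ring
  haveI : Nonempty E := ⟨⟨ℓ, hℓE⟩⟩
  -- extension of an element of E to ℝ
  let ext : E → ℝ → ℝ := fun h s => (h : C(I, ℝ)) (projIcc (x 0) (x N) hle s)
  have hextmem : ∀ (h : E) (s : ℝ) (hs : s ∈ I), ext h s = (h : C(I, ℝ)) ⟨s, hs⟩ := by
    intro h s hs
    show (h : C(I, ℝ)) (projIcc (x 0) (x N) hle s) = _
    rw [projIcc_of_mem hle hs]
  have hextC : ∀ h : E, ContinuousOn (ext h) I := fun h =>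
    ((h : C(I, ℝ)).continuous.comp (continuous_projIcc)).continuousOn
  have hext0 : ∀ h : E, ext h (x 0) = y 0 := by
    intro h
    rw [hextmem h (x 0) p0.2]
    exact h.2.1
  have hextN : ∀ h : E, ext h (x N) = y N := by
    intro h
    rw [hextmem h (x N) pN.2]
    exact h.2.2
  -- the operator
  let Φ : E → E := fun h =>
    ⟨⟨fun p => Tf x y a b e γ f (ext h) N (p : ℝ),
      (ContinuousOn.restrict ((Tf_main hx ha hA0 hAN hj0 hjN (hextC h)
        (hext0 h) (hextN h) N hN le_rfl).2))⟩,
      Tf_x0 hx hN (ext h),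
      Tf_xN hx ha hA0 hAN hj0 hjN hN (hextC h) (hext0 h) (hextN h)⟩
  -- contraction constant
  have hEne : (Finset.Icc 1 N).Nonempty := Finset.nonempty_Icc.mpr hN
  set Ksup := (Finset.Icc 1 N).sup' hEne (fun n => |γ n|) with hKsup
  have hK0 : 0 ≤ Ksup := by
    rw [hKsup]
    exact le_trans (abs_nonneg (γ 1)) (Finset.le_sup' (fun n => |γ n|) (Finset.mem_Icc.mpr ⟨le_rfl, hN⟩))
  have hK1 : Ksup < 1 := by
    rw [hKsup, Finset.sup'_lt_iff]
    intro n hn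
    rw [Finset.mem_Icc] at hn
    exact hγ n hn.1 hn.2
  have hKle : ∀ n, 1 ≤ n → n ≤ N → |γ n| ≤ Ksup := by
    intro n h1 h2
    rw [hKsup]
    exact Finset.le_sup' (fun n => |γ n|) (Finset.mem_Icc.mpr ⟨h1, h2⟩)
  let K : NNReal := ⟨Ksup, hK0⟩
  have hcontr : ContractingWith K Φ := by
    constructor
    · exact_mod_cast hK1
    · apply LipschitzWith.of_dist_le_mul
      intro g h
      rw [Subtype.dist_eq (Φ g) (Φ h)]
      have hC : (0 : ℝ) ≤ (K : ℝ) * dist g h := mul_nonneg hK0 dist_nonneg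
      rw [ContinuousMap.dist_le hC]
      rintro ⟨s, hs⟩
      obtain ⟨n, h1, h2, h3⟩ := cover hx hN hs
      have hg' := (Tf_main hx ha hA0 hAN hj0 hjN (hextC g) (hext0 g) (hextN g)
        N hN le_rfl).1 n h1 h2 s h3
      have hh' := (Tf_main hx ha hA0 hAN hj0 hjN (hextC h) (hext0 h) (hextN h)
        N hN le_rfl).1 n h1 h2 s h3
      show dist (Tf x y a b e γ f (ext g) N s) (Tf x y a b e γ f (ext h) N s) ≤ _
      rw [hg', hh']
      set u := linv a b n s with hu
      have humem : u ∈ I := linv_mem ha hA0 hAN h1 h2 h3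
      have hdiff : dist (piece a b e γ f (ext g) n s) (piece a b e γ f (ext h) n s)
          = |γ n| * |ext g u - ext h u| := by
        unfold piece
        rw [Real.dist_eq, ← hu, ← abs_mul]
        ring_nf
      rw [hdiff]
      have hd1 : |ext g u - ext h u| ≤ dist g h := by
        rw [hextmem g u humem, hextmem h u humem, ← Real.dist_eq]
        calc dist ((g : C(I, ℝ)) ⟨u, humem⟩) ((h : C(I, ℝ)) ⟨u, humem⟩)
            ≤ dist (g : C(I, ℝ)) (h : C(I, ℝ)) := ContinuousMap.dist_apply_le_dist _
          _ = dist g h := (Subtype.dist_eq g h).symm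
      calc |γ n| * |ext g u - ext h u| ≤ Ksup * dist g h :=
            mul_le_mul (hKle n h1 h2) hd1 (abs_nonneg _) hK0
        _ = (K : ℝ) * dist g h := rfl
  -- the fixed point
  set fp := ContractingWith.fixedPoint Φ hcontr with hfp
  have hfix : Φ fp = fp := hcontr.fixedPoint_isFixedPt
  refine ⟨ext fp, ⟨hextC fp, hext0 fp, hextN fp, ?_⟩, ?_, ?_⟩
  · -- functional equation
    intro n h1 h2 t ht
    have hLmem : a n * t + b n ∈ I := by
      have := L_mem ha hA0 hAN h1 h2 ht
      exact ⟨le_trans (xmono hx 0 (n - 1) (Nat.zero_le _) (le_trans (Nat.sub_le n 1) h2)) this.1,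
        le_trans this.2 (xmono hx n N h2 le_rfl)⟩
    have step : ∀ s (hs : s ∈ I), ext fp s = Tf x y a b e γ f (ext fp) N s := by
      intro s hs
      rw [hextmem fp s hs]
      conv_lhs => rw [← hfix]
      rfl
    rw [step _ hLmem]
    exact Tf_eq hx ha hA0 hAN hj0 hjN hN (hextC fp) (hext0 fp) (hextN fp) h1 h2 ht
  · -- interpolation
    intro n hn
    rcases Nat.eq_zero_or_pos n with h | h
    · rw [h]; exact hext0 fp
    · have hxN : a n * x N + b n = x n := hAN n h hn
      have heq : ext fp (a n * x N + b n) = e n * x N + γ n * ext fp (x N) + f n := by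
        have hLmem : a n * x N + b n ∈ I := by
          rw [hxN]
          exact ⟨xmono hx 0 n (Nat.zero_le n) hn, xmono hx n N hn le_rfl⟩
        have step : ext fp (a n * x N + b n) = Tf x y a b e γ f (ext fp) N (a n * x N + b n) := by
          rw [hextmem fp _ hLmem]
          conv_lhs => rw [← hfix]
          rfl
        rw [step]
        exact Tf_eq hx ha hA0 hAN hj0 hjN hN (hextC fp) (hext0 fp) (hextN fp) h hn
          (right_mem_Icc.mpr hle)
      rw [hxN] at heq
      rw [heq, hextN fp, hjN n h hn]
  · -- uniqueness
    rintro g' ⟨hg'C, hg'0, hg'N, hg'eq⟩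
    have h'E : (⟨fun p => g' (p : ℝ), hg'C.restrict⟩ : C(I, ℝ)) ∈ E := by
      constructor
      · show g' (x 0) = y 0; exact hg'0
      · show g' (x N) = y N; exact hg'N
    set h' : E := ⟨⟨fun p => g' (p : ℝ), hg'C.restrict⟩, h'E⟩ with hh'
    have hexth' : ∀ s (hs : s ∈ I), ext h' s = g' s := by
      intro s hs
      rw [hextmem h' s hs]
      rfl
    have hfixh' : Function.IsFixedPt Φ h' := by
      apply Subtype.ext
      apply ContinuousMap.ext
      rintro ⟨s, hs⟩
      show Tf x y a b e γ f (ext h') N s = g' s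
      obtain ⟨n, h1, h2, h3⟩ := cover hx hN hs
      have hTf := (Tf_main hx ha hA0 hAN hj0 hjN (hextC h') (hext0 h') (hextN h')
        N hN le_rfl).1 n h1 h2 s h3
      rw [hTf]
      set u := linv a b n s with hu
      have humem : u ∈ I := linv_mem ha hA0 hAN h1 h2 h3
      have hLu : a n * u + b n = s := L_linv (ha n h1 h2) s
      have := hg'eq n h1 h2 u humem
      rw [hLu] at this
      unfold piece
      rw [← hu, hexth' u humem, ← this]
    have : h' = fp := hcontr.fixedPoint_unique hfixh'
    intro s hs
    have : ext fp s = ext h' s := by rw [this]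
    rw [this, hexth' s hs]

end Main
end Stmt6Aux


/-- (single IFS, M = 1) The Read-Bajraktarevic operator
`(Tg)(L n t) = G n (t, g t)` is well defined on the space `𝒢` of continuous
functions on `I` with prescribed endpoint values, is a contraction with ratio
`max_n |γ n| < 1`, and its unique fixed point `g` interpolates the data:
`g (x n) = y n` for all `n`. -/
theorem stmt_6 (N : ℕ) (hN : 1 ≤ N) (x y : ℕ → ℝ)
    (hx : ∀ i, i < N → x i < x (i + 1))
    (a b e γ f : ℕ → ℝ)
    (ha : ∀ n ∈ Finset.Icc 1 N, 0 < a n)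
    (L : ℕ → ℝ → ℝ) (hL : ∀ n t, L n t = a n * t + b n)
    (hL0 : ∀ n ∈ Finset.Icc 1 N, L n (x 0) = x (n - 1))
    (hLN : ∀ n ∈ Finset.Icc 1 N, L n (x N) = x n)
    (hγ : ∀ n ∈ Finset.Icc 1 N, |γ n| < 1)
    (hjoin0 : ∀ n ∈ Finset.Icc 1 N, e n * x 0 + γ n * y 0 + f n = y (n - 1))
    (hjoinN : ∀ n ∈ Finset.Icc 1 N, e n * x N + γ n * y N + f n = y n) :
    -- (i) T is well defined: Tg is continuous and has the right endpoint values
    (∀ g : ℝ → ℝ, ContinuousOn g (Icc (x 0) (x N)) →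
        g (x 0) = y 0 → g (x N) = y N →
      ∃ Tg : ℝ → ℝ, ContinuousOn Tg (Icc (x 0) (x N)) ∧
        Tg (x 0) = y 0 ∧ Tg (x N) = y N ∧
        ∀ n ∈ Finset.Icc 1 N, ∀ t ∈ Icc (x 0) (x N),
          Tg (L n t) = e n * t + γ n * g t + f n) ∧
    -- (ii) T is a contraction with ratio `max_n |γ n| < 1`
    ((Finset.Icc 1 N).sup' (Finset.nonempty_Icc.mpr hN) (fun n => |γ n|) < 1 ∧
      ∀ g h : ℝ → ℝ, ∀ n ∈ Finset.Icc 1 N, ∀ t ∈ Icc (x 0) (x N),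
        |(e n * t + γ n * g t + f n) - (e n * t + γ n * h t + f n)| ≤
          (Finset.Icc 1 N).sup' (Finset.nonempty_Icc.mpr hN)
            (fun n => |γ n|) * |g t - h t|) ∧
    -- (iii) unique fixed point, which interpolates the data
    (∃ g : ℝ → ℝ, (ContinuousOn g (Icc (x 0) (x N)) ∧
        g (x 0) = y 0 ∧ g (x N) = y N ∧
        (∀ n ∈ Finset.Icc 1 N, ∀ t ∈ Icc (x 0) (x N),
          g (L n t) = e n * t + γ n * g t + f n)) ∧
      (∀ n ≤ N, g (x n) = y n) ∧
      ∀ g' : ℝ → ℝ, (ContinuousOn g' (Icc (x 0) (x N)) ∧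
        g' (x 0) = y 0 ∧ g' (x N) = y N ∧
        (∀ n ∈ Finset.Icc 1 N, ∀ t ∈ Icc (x 0) (x N),
          g' (L n t) = e n * t + γ n * g' t + f n)) →
        EqOn g g' (Icc (x 0) (x N))) := by
  have ha' : ∀ n, 1 ≤ n → n ≤ N → 0 < a n := fun n h1 h2 =>
    ha n (Finset.mem_Icc.mpr ⟨h1, h2⟩)
  have hA0' : ∀ n, 1 ≤ n → n ≤ N → a n * x 0 + b n = x (n - 1) := fun n h1 h2 => by
    rw [← hL n (x 0)]; exact hL0 n (Finset.mem_Icc.mpr ⟨h1, h2⟩)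
  have hAN' : ∀ n, 1 ≤ n → n ≤ N → a n * x N + b n = x n := fun n h1 h2 => by
    rw [← hL n (x N)]; exact hLN n (Finset.mem_Icc.mpr ⟨h1, h2⟩)
  have hγ' : ∀ n, 1 ≤ n → n ≤ N → |γ n| < 1 := fun n h1 h2 =>
    hγ n (Finset.mem_Icc.mpr ⟨h1, h2⟩)
  have hj0' : ∀ n, 1 ≤ n → n ≤ N → e n * x 0 + γ n * y 0 + f n = y (n - 1) := fun n h1 h2 =>
    hjoin0 n (Finset.mem_Icc.mpr ⟨h1, h2⟩)
  have hjN' : ∀ n, 1 ≤ n → n ≤ N → e n * x N + γ n * y N + f n = y n := fun n h1 h2 =>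
    hjoinN n (Finset.mem_Icc.mpr ⟨h1, h2⟩)
  refine ⟨?_, ⟨?_, ?_⟩, ?_⟩
  · -- (i)
    intro g hg hg0 hgN
    refine ⟨Stmt6Aux.Tf x y a b e γ f g N,
      (Stmt6Aux.Tf_main hx ha' hA0' hAN' hj0' hjN' hg hg0 hgN N hN le_rfl).2,
      Stmt6Aux.Tf_x0 hx hN g,
      Stmt6Aux.Tf_xN hx ha' hA0' hAN' hj0' hjN' hN hg hg0 hgN, ?_⟩
    intro n hn t ht
    rw [Finset.mem_Icc] at hn
    rw [hL n t]
    exact Stmt6Aux.Tf_eq hx ha' hA0' hAN' hj0' hjN' hN hg hg0 hgN hn.1 hn.2 ht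
  · -- (ii) ratio < 1
    rw [Finset.sup'_lt_iff]
    intro n hn
    exact hγ n hn
  · -- (ii) contraction estimate
    intro g h n hn t ht
    have hdiff : (e n * t + γ n * g t + f n) - (e n * t + γ n * h t + f n)
        = γ n * (g t - h t) := by ring
    rw [hdiff, abs_mul]
    exact mul_le_mul_of_nonneg_right
      (Finset.le_sup' (fun n => |γ n|) hn) (abs_nonneg _)
  · -- (iii)
    obtain ⟨g, ⟨hC, h0, hN', heq⟩, hinterp, huniq⟩ :=
      Stmt6Aux.exists_fp hx ha' hA0' hAN' hj0' hjN' hN hγ'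
    refine ⟨g, ⟨hC, h0, hN', ?_⟩, fun n hn => hinterp n hn, ?_⟩
    · intro n hn t ht
      rw [Finset.mem_Icc] at hn
      rw [hL n t]
      exact heq n hn.1 hn.2 t ht
    · rintro g' ⟨h1, h2, h3, h4⟩
      refine huniq g' ⟨h1, h2, h3, fun n hn1 hn2 t ht => ?_⟩
      rw [← hL n t]
      exact h4 n (Finset.mem_Icc.mpr ⟨hn1, hn2⟩) t ht
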